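/- For every η₀ < 0, the equation χ = tanh(χ − η₀) has exactly one solution χ(η₀) with χ > 0, and this solution lies in the interval (0,1). Moreover, χ(η₀)/(−3η₀)^{1/3} → 1 as η₀ → 0⁻; indeed χ(η₀) = (−3η₀)^{1/3} + O(η₀) as η₀ → 0⁻. -/

import Mathlib

open Real Filter

private lemma monoOn_aux {f f' : ℝ → ℝ} (h : ∀ x, HasDerivAt f (f' x) x)
    {s : Set ℝ} (hs : Convex ℝ s) (h' : ∀ x ∈ s, 0 ≤ f' x) : MonotoneOn f s := by
  have hd : Differentiable ℝ f := fun x => (h x).differentiableAt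
  exact monotoneOn_of_deriv_nonneg hs hd.continuous.continuousOn hd.differentiableOn
    (fun x hx => by rw [(h x).deriv]; exact h' x (interior_subset hx))

private lemma sinh_lt_cosh' (x : ℝ) : Real.sinh x < Real.cosh x := by
  rw [Real.sinh_eq, Real.cosh_eq]
  have := Real.exp_pos (-x)
  linarith

private lemma tanh_lt_one' (x : ℝ) : Real.tanh x < 1 := by
  rw [Real.tanh_eq_sinh_div_cosh, div_lt_one (Real.cosh_pos x)]
  exact sinh_lt_cosh' x

private lemma tanh_pos' {x : ℝ} (hx : 0 < x) : 0 < Real.tanh x := by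
  rw [Real.tanh_eq_sinh_div_cosh]
  exact div_pos (Real.sinh_pos_iff.mpr hx) (Real.cosh_pos x)

private lemma continuous_tanh' : Continuous Real.tanh := by
  have h : Continuous fun x => Real.sinh x / Real.cosh x :=
    Real.continuous_sinh.div Real.continuous_cosh (fun x => (Real.cosh_pos x).ne')
  have he : Real.tanh = fun x => Real.sinh x / Real.cosh x :=
    funext fun x => Real.tanh_eq_sinh_div_cosh x
  rw [he]
  exact h

private lemma k_nonneg {x : ℝ} (hx : 0 ≤ x) :
    0 ≤ x * Real.cosh x - (1 - x ^ 2 / 3) * Real.sinh x := by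
  have hder : ∀ y : ℝ, HasDerivAt (fun z => z * Real.cosh z - (1 - z ^ 2 / 3) * Real.sinh z)
      (5 * y / 3 * Real.sinh y + y ^ 2 / 3 * Real.cosh y) y := by
    intro y
    have h1 : HasDerivAt (fun z : ℝ => z * Real.cosh z)
        (1 * Real.cosh y + y * Real.sinh y) y :=
      (hasDerivAt_id y).mul (Real.hasDerivAt_cosh y)
    have ha : HasDerivAt (fun z : ℝ => 1 - z ^ 2 / 3) (-(2 * y / 3)) y := by
      have := ((hasDerivAt_pow 2 y).div_const 3).const_sub 1
      simpa using this
    have h2 := ha.mul (Real.hasDerivAt_sinh y)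
    have := h1.sub h2
    refine this.congr_deriv ?_
    ring
  have hm : MonotoneOn (fun z => z * Real.cosh z - (1 - z ^ 2 / 3) * Real.sinh z)
      (Set.Ici (0:ℝ)) := by
    refine monoOn_aux hder (convex_Ici 0) (fun y hy => ?_)
    have hy0 : (0:ℝ) ≤ y := hy
    have hs : 0 ≤ Real.sinh y := Real.sinh_nonneg_iff.mpr hy0
    have hc := (Real.cosh_pos y).le
    have h1 : 0 ≤ 5 * y / 3 * Real.sinh y := by positivity
    have h2 : 0 ≤ y ^ 2 / 3 * Real.cosh y := by positivity
    linarith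
  have := hm Set.self_mem_Ici hx hx
  simpa using this

private lemma sinh_ge_poly {x : ℝ} (hx : 0 ≤ x) :
    (x - x ^ 3 / 3) * Real.cosh x ≤ Real.sinh x := by
  have hder : ∀ y : ℝ, HasDerivAt (fun z => Real.sinh z - (z - z ^ 3 / 3) * Real.cosh z)
      (y * (y * Real.cosh y - (1 - y ^ 2 / 3) * Real.sinh y)) y := by
    intro y
    have ha : HasDerivAt (fun z : ℝ => z - z ^ 3 / 3) (1 - 3 * y ^ 2 / 3) y := by
      have := (hasDerivAt_id y).sub ((hasDerivAt_pow 3 y).div_const 3)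
      exact this.congr_deriv (by norm_num)
    have h2 := ha.mul (Real.hasDerivAt_cosh y)
    have := (Real.hasDerivAt_sinh y).sub h2
    refine this.congr_deriv ?_
    ring
  have hm : MonotoneOn (fun z => Real.sinh z - (z - z ^ 3 / 3) * Real.cosh z)
      (Set.Ici (0:ℝ)) := by
    refine monoOn_aux hder (convex_Ici 0) (fun y hy => ?_)
    have hy0 : (0:ℝ) ≤ y := hy
    exact mul_nonneg hy0 (k_nonneg hy0)
  have h := hm Set.self_mem_Ici hx hx
  simp only [Real.sinh_zero, Real.cosh_zero] at h
  nlinarith [h]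

private lemma tanh_ge_poly {x : ℝ} (hx : 0 ≤ x) : x - x ^ 3 / 3 ≤ Real.tanh x := by
  rw [Real.tanh_eq_sinh_div_cosh, le_div_iff₀ (Real.cosh_pos x)]
  exact sinh_ge_poly hx

private lemma sinh_le_poly {x : ℝ} (hx : 0 ≤ x) (hx2 : x ≤ 2) :
    Real.sinh x ≤ (x - x ^ 3 / 3 + 2 / 15 * x ^ 5) * Real.cosh x := by
  have hder : ∀ y : ℝ,
      HasDerivAt (fun z => (z - z ^ 3 / 3 + 2 / 15 * z ^ 5) * Real.cosh z - Real.sinh z)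
      ((1 - y ^ 2 + 2 / 3 * y ^ 4) * Real.cosh y
        + (y - y ^ 3 / 3 + 2 / 15 * y ^ 5) * Real.sinh y - Real.cosh y) y := by
    intro y
    have ha : HasDerivAt (fun z : ℝ => z - z ^ 3 / 3 + 2 / 15 * z ^ 5)
        (1 - y ^ 2 + 2 / 3 * y ^ 4) y := by
      have h1 := (hasDerivAt_id y).sub ((hasDerivAt_pow 3 y).div_const 3)
      have h2 := (hasDerivAt_pow 5 y).const_mul (2/15 : ℝ)
      have := h1.add h2
      refine this.congr_deriv ?_
      push_cast
      ring
    exact (ha.mul (Real.hasDerivAt_cosh y)).sub (Real.hasDerivAt_sinh y)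
  have hm : MonotoneOn (fun z => (z - z ^ 3 / 3 + 2 / 15 * z ^ 5) * Real.cosh z - Real.sinh z)
      (Set.Icc (0:ℝ) 2) := by
    have hd : Differentiable ℝ
        (fun z => (z - z ^ 3 / 3 + 2 / 15 * z ^ 5) * Real.cosh z - Real.sinh z) :=
      fun y => (hder y).differentiableAt
    refine monotoneOn_of_deriv_nonneg (convex_Icc 0 2) hd.continuous.continuousOn
      hd.differentiableOn (fun y hy => ?_)
    rw [interior_Icc] at hy
    rw [(hder y).deriv]
    have hy0 : (0:ℝ) ≤ y := hy.1.le
    have hy2 : y ≤ 2 := hy.2.le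
    have hB : 0 ≤ y - y ^ 3 / 3 + 2 / 15 * y ^ 5 := by
      nlinarith [mul_nonneg hy0 (sq_nonneg (y ^ 2 - 5 / 4)), sq_nonneg y]
    have hsinh := sinh_ge_poly hy0
    have hcosh := (Real.cosh_pos y).le
    have hpoly : 0 ≤ -(y ^ 2) + 2 / 3 * y ^ 4
        + (y - y ^ 3 / 3 + 2 / 15 * y ^ 5) * (y - y ^ 3 / 3) := by
      have heq : -(y ^ 2) + 2 / 3 * y ^ 4
          + (y - y ^ 3 / 3 + 2 / 15 * y ^ 5) * (y - y ^ 3 / 3)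
          = y ^ 6 * (11 - 2 * y ^ 2) / 45 := by ring
      rw [heq]
      have h6 : 0 ≤ y ^ 6 := by positivity
      have h7 : (0:ℝ) ≤ 11 - 2 * y ^ 2 := by nlinarith
      nlinarith [mul_nonneg h6 h7]
    nlinarith [mul_nonneg hpoly hcosh, mul_nonneg hB (sub_nonneg.mpr hsinh)]
  have := hm (Set.left_mem_Icc.mpr (by norm_num)) ⟨hx, hx2⟩ hx
  simp only [Real.sinh_zero, Real.cosh_zero] at this
  nlinarith [this]

private lemma tanh_le_poly {x : ℝ} (hx : 0 ≤ x) (hx2 : x ≤ 2) :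
    Real.tanh x ≤ x - x ^ 3 / 3 + 2 / 15 * x ^ 5 := by
  rw [Real.tanh_eq_sinh_div_cosh, div_le_iff₀ (Real.cosh_pos x)]
  exact sinh_le_poly hx hx2

private lemma strictMono_sub_tanh : StrictMonoOn (fun u => u - Real.tanh u) (Set.Ici (0:ℝ)) := by
  have hder : ∀ y : ℝ, HasDerivAt (fun u => u - Real.tanh u)
      (1 - (Real.cosh y * Real.cosh y - Real.sinh y * Real.sinh y) / Real.cosh y ^ 2) y := by
    intro y
    have h1 : HasDerivAt (fun u : ℝ => Real.sinh u / Real.cosh u)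
        ((Real.cosh y * Real.cosh y - Real.sinh y * Real.sinh y) / Real.cosh y ^ 2) y :=
      (Real.hasDerivAt_sinh y).div (Real.hasDerivAt_cosh y) (Real.cosh_pos y).ne'
    have := (hasDerivAt_id y).sub h1
    simp only [Real.tanh_eq_sinh_div_cosh]
    exact this
  refine strictMonoOn_of_hasDerivWithinAt_pos (convex_Ici 0)
    ((continuous_id.sub continuous_tanh').continuousOn)
    (fun y _ => (hder y).hasDerivWithinAt) (fun y hy => ?_)
  rw [interior_Ici] at hy
  have h1 : 1 < Real.cosh y := Real.one_lt_cosh.mpr (ne_of_gt hy)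
  have h2 : Real.cosh y * Real.cosh y - Real.sinh y * Real.sinh y = 1 := by
    have := Real.cosh_sq_sub_sinh_sq y
    nlinarith [this]
  rw [h2]
  have h3 : 1 < Real.cosh y ^ 2 := by nlinarith
  have h4 : (1:ℝ) / Real.cosh y ^ 2 < 1 := by
    rw [div_lt_one (by positivity)]; exact h3
  linarith

private lemma cube_rpow {x : ℝ} (hx : 0 ≤ x) : (x ^ ((1:ℝ)/3)) ^ 3 = x := by
  rw [← Real.rpow_natCast (x ^ ((1:ℝ)/3)) 3, ← Real.rpow_mul hx]
  norm_num

/-- The holographic screen leaf radius in the worked example: for each `η₀ < 0` the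
equation `χ = tanh(χ − η₀)` has a unique positive solution, lying in `(0,1)`, and this
solution behaves as `(−3η₀)^{1/3} + O(η₀)` as `η₀ → 0⁻`. -/
theorem stmt_18 :
    (∀ η₀ : ℝ, η₀ < 0 →
      (∃! χ : ℝ, 0 < χ ∧ χ = Real.tanh (χ - η₀)) ∧
      (∀ χ : ℝ, 0 < χ → χ = Real.tanh (χ - η₀) → χ ∈ Set.Ioo (0:ℝ) 1)) ∧
    (∀ c : ℝ → ℝ, (∀ η₀ : ℝ, η₀ < 0 → 0 < c η₀ ∧ c η₀ = Real.tanh (c η₀ - η₀)) →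
      Tendsto (fun η₀ => c η₀ / (-3 * η₀) ^ ((1:ℝ)/3))
        (nhdsWithin 0 (Set.Iio 0)) (nhds 1) ∧
      ∃ C > 0, ∃ δ > 0, ∀ η₀ ∈ Set.Ioo (-δ) (0:ℝ),
        |c η₀ - (-3 * η₀) ^ ((1:ℝ)/3)| ≤ C * (-η₀)) := by
  constructor
  · -- existence, uniqueness, and membership in (0,1)
    intro η₀ hη₀
    have hcont : Continuous (fun χ : ℝ => χ - Real.tanh (χ - η₀)) :=
      continuous_id.sub (continuous_tanh'.comp (continuous_id.sub continuous_const))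
    have hF0 : (0:ℝ) - Real.tanh (0 - η₀) < 0 := by
      have := tanh_pos' (show (0:ℝ) < 0 - η₀ by linarith)
      linarith
    have hF1 : 0 < (1:ℝ) - Real.tanh (1 - η₀) := by
      have := tanh_lt_one' (1 - η₀)
      linarith
    obtain ⟨χ, hχmem, hχeq⟩ : ∃ χ ∈ Set.Icc (0:ℝ) 1, χ - Real.tanh (χ - η₀) = 0 := by
      have hsub := intermediate_value_Icc (by norm_num : (0:ℝ) ≤ 1) hcont.continuousOn
      have h0mem : (0:ℝ) ∈ Set.Icc ((0:ℝ) - Real.tanh (0 - η₀)) ((1:ℝ) - Real.tanh (1 - η₀)) :=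
        ⟨hF0.le, hF1.le⟩
      obtain ⟨χ, hχ, h⟩ := hsub h0mem
      exact ⟨χ, hχ, h⟩
    have hχpos : 0 < χ := by
      rcases hχmem.1.lt_or_eq with h | h
      · exact h
      · exfalso; rw [← h] at hχeq; linarith
    have heq : χ = Real.tanh (χ - η₀) := by linarith
    -- uniqueness via strict monotonicity of u - tanh u
    have huniq : ∀ χ' : ℝ, 0 < χ' → χ' = Real.tanh (χ' - η₀) → χ' = χ := by
      intro χ' hpos' heq'
      have h1 : χ' - η₀ ∈ Set.Ici (0:ℝ) := by simp; linarith
      have h2 : χ - η₀ ∈ Set.Ici (0:ℝ) := by simp; linarith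
      have hval : (fun u => u - Real.tanh u) (χ' - η₀) = (fun u => u - Real.tanh u) (χ - η₀) := by
        simp only
        rw [← heq', ← heq]
        ring
      have := strictMono_sub_tanh.injOn h1 h2 hval
      linarith
    refine ⟨⟨χ, ⟨hχpos, heq⟩, fun χ' h' => huniq χ' h'.1 h'.2⟩, ?_⟩
    intro χ' hpos' heq'
    refine ⟨hpos', ?_⟩
    rw [heq']
    exact tanh_lt_one' _
  · -- asymptotics
    intro c hc
    have key : ∀ η₀ ∈ Set.Ioo (-(1/10) : ℝ) 0,
        |c η₀ - (-3 * η₀) ^ ((1:ℝ)/3)| ≤ 14 * (-η₀) ∧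
        c η₀ - (-3 * η₀) ^ ((1:ℝ)/3) ≤ (64/5) * (-η₀) := by
      intro η₀ hmem
      obtain ⟨hδ, hη₀⟩ := hmem
      obtain ⟨hχpos, heq⟩ := hc η₀ hη₀
      set χ := c η₀ with hχdef
      set u := χ - η₀ with hudef
      set t := (-3 * η₀) ^ ((1:ℝ)/3) with htdef
      have ht3 : t ^ 3 = -3 * η₀ := cube_rpow (by linarith)
      have htpos : 0 < t := Real.rpow_pos_of_pos (by linarith) _
      clear_value χ u t
      have hu0 : 0 < u := by rw [hudef]; linarith
      have hχ1 : χ < 1 := by rw [heq]; exact tanh_lt_one' _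
      have hu11 : u ≤ 11/10 := by rw [hudef]; linarith
      have hu2 : u ≤ 2 := by linarith
      have hχu : χ = u + η₀ := by rw [hudef]; ring
      have hA : u - u ^ 3 / 3 ≤ u + η₀ := by
        have h := tanh_ge_poly hu0.le
        rw [← heq] at h
        linarith
      have hB : u + η₀ ≤ u - u ^ 3 / 3 + 2 / 15 * u ^ 5 := by
        have h := tanh_le_poly hu0.le hu2
        rw [← heq] at h
        linarith
      have h1 : -3 * η₀ ≤ u ^ 3 := by linarith
      have hu5 : u ^ 5 ≤ (121/100) * u ^ 3 := by
        have hp3 : (0:ℝ) ≤ u ^ 3 := by positivity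
        have hp4 : (0:ℝ) ≤ u ^ 4 := by positivity
        nlinarith [mul_nonneg hp3 (by linarith : (0:ℝ) ≤ 11/10 - u),
          mul_nonneg hp4 (by linarith : (0:ℝ) ≤ 11/10 - u)]
      have h2 : u ^ 3 ≤ -6 * η₀ := by linarith
      have htu : t ≤ u := le_of_pow_le_pow_left₀ three_ne_zero hu0.le (by rw [ht3]; exact h1)
      have hu2t : u ≤ 2 * t := by
        refine le_of_pow_le_pow_left₀ three_ne_zero (by positivity) ?_
        have : (2 * t) ^ 3 = 8 * t ^ 3 := by ring
        rw [this, ht3]; linarith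
      have e1 : (u - t) * (3 * t ^ 2) ≤ u ^ 3 - t ^ 3 := by
        nlinarith [mul_nonneg (mul_nonneg (sub_nonneg.mpr htu) (sub_nonneg.mpr htu))
          (by positivity : (0:ℝ) ≤ u + 2 * t)]
      have e2 : u ^ 5 ≤ 32 * t ^ 5 := by
        have := pow_le_pow_left₀ hu0.le hu2t 5
        nlinarith [this]
      have e3 : u ^ 3 - t ^ 3 ≤ 2 / 5 * u ^ 5 := by
        rw [ht3]; linarith
      have hfinal : u - t ≤ (64/15) * t ^ 3 := by
        have h1' : (u - t) * (3 * t ^ 2) ≤ (64/15) * t ^ 3 * (3 * t ^ 2) := by nlinarith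
        exact le_of_mul_le_mul_right h1' (by positivity)
      have hut : u - t ≤ (64/5) * (-η₀) := by
        rw [ht3] at hfinal; linarith
      have hut0 : 0 ≤ u - t := sub_nonneg.mpr htu
      constructor
      · rw [abs_le]
        constructor
        · have : χ - t = (u - t) + η₀ := by rw [hχu]; ring
          rw [this]; linarith
        · have : χ - t = (u - t) + η₀ := by rw [hχu]; ring
          rw [this]; linarith
      · have : χ - t = (u - t) + η₀ := by rw [hχu]; ring
        rw [this]; linarith
    constructor
    · -- tendsto
      have hbound : ∀ η₀ ∈ Set.Ioo (-(1/10) : ℝ) 0,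
          ‖c η₀ / (-3 * η₀) ^ ((1:ℝ)/3) - 1‖ ≤ 14 * ((-η₀) ^ ((1:ℝ)/3)) ^ 2 := by
        intro η₀ hmem
        have hη₀ := hmem.2
        have hkey := (key η₀ hmem).1
        set t := (-3 * η₀) ^ ((1:ℝ)/3) with htdef
        set s := (-η₀) ^ ((1:ℝ)/3) with hsdef
        have ht3 : t ^ 3 = -3 * η₀ := cube_rpow (by linarith)
        have hs3 : s ^ 3 = -η₀ := cube_rpow (by linarith)
        have htpos : 0 < t := Real.rpow_pos_of_pos (by linarith) _
        have hspos : 0 < s := Real.rpow_pos_of_pos (by linarith) _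
        clear_value s t
        have hst : s ≤ t :=
          le_of_pow_le_pow_left₀ three_ne_zero htpos.le (by rw [hs3, ht3]; linarith)
        have hdiv : c η₀ / t - 1 = (c η₀ - t) / t := by field_simp
        rw [hdiv, Real.norm_eq_abs, abs_div, abs_of_pos htpos]
        calc |c η₀ - t| / t ≤ (14 * (-η₀)) / t := by gcongr
          _ = (14 * s ^ 3) / t := by rw [hs3]
          _ ≤ (14 * s ^ 3) / s := by gcongr
          _ = 14 * s ^ 2 := by
              field_simp
      have htend0 : Tendsto (fun η₀ : ℝ => 14 * ((-η₀) ^ ((1:ℝ)/3)) ^ 2)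
          (nhdsWithin 0 (Set.Iio 0)) (nhds 0) := by
        have h1 : Tendsto (fun η₀ : ℝ => -η₀) (nhdsWithin (0:ℝ) (Set.Iio 0)) (nhds 0) := by
          have h := (continuous_neg.tendsto (0:ℝ)).mono_left
            (nhdsWithin_le_nhds (s := Set.Iio 0))
          simpa using h
        have h2 : ContinuousAt (fun x : ℝ => 14 * (x ^ ((1:ℝ)/3)) ^ 2) 0 := by
          have hr := Real.continuousAt_rpow_const 0 (1/3) (Or.inr (by norm_num))
          exact continuousAt_const.mul (hr.pow 2)
        have := h2.tendsto.comp h1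
        simp only [Function.comp_def] at this
        simpa [Real.zero_rpow (by norm_num : ((1:ℝ)/3) ≠ 0)] using this
      have hsqueeze : Tendsto (fun η₀ => c η₀ / (-3 * η₀) ^ ((1:ℝ)/3) - 1)
          (nhdsWithin 0 (Set.Iio 0)) (nhds 0) := by
        refine squeeze_zero_norm' ?_ htend0
        have hmem : Set.Ioo (-(1/10) : ℝ) 0 ∈ nhdsWithin (0:ℝ) (Set.Iio 0) :=
          Ioo_mem_nhdsLT_of_mem ⟨by norm_num, le_refl 0⟩
        exact Filter.eventually_of_mem hmem hbound
      exact tendsto_sub_nhds_zero_iff.mp hsqueeze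
    · -- big-O bound
      exact ⟨14, by norm_num, 1/10, by norm_num, fun η₀ hmem => (key η₀ hmem).1⟩
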